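/- The function f(p_c) = (τ - Nτ_c)·(A·p_d·[M - βσ²(N-1)/(βNp_cτ_c + σ²(K+1))] + B) - Nτ_c·p_c is strictly concave in p_c on (0,∞): its second derivative equals -2A·p_d(τ-Nτ_c)σ²N²(N-1)τ_c²β³/(βNp_cτ_c + σ²(K+1))³ < 0. -/

import Mathlib

/-- The approximate average stored energy
`f(p_c) = (τ - Nτ_c)(A p_d [M - βσ²(N-1)/(βN p_c τ_c + σ²(K+1))] + B) - Nτ_c p_c`
is strictly concave in `p_c` on `(0,∞)`, with second derivative
`-2 A p_d (τ-Nτ_c) σ² N² (N-1) τ_c² β³ / (βN p_c τ_c + σ²(K+1))³ < 0`. -/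
theorem stored_energy_concave_in_power (A B pd β σ2 τc τ K M : ℝ) (N : ℕ)
    (hA : 0 < A) (hpd : 0 < pd) (hβ : 0 < β) (hσ : 0 < σ2) (hτc : 0 < τc)
    (hτ : N * τc < τ) (hK : 0 ≤ K) (hN : 2 ≤ N) :
    StrictConcaveOn ℝ (Set.Ioi 0)
      (fun pc : ℝ => (τ - N * τc) * (A * pd * (M
        - β * σ2 * (N - 1) / (β * N * pc * τc + σ2 * (K + 1))) + B) - N * τc * pc)
    ∧ ∀ pc : ℝ, 0 < pc →
      deriv (deriv (fun pc : ℝ => (τ - N * τc) * (A * pd * (M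
        - β * σ2 * (N - 1) / (β * N * pc * τc + σ2 * (K + 1))) + B) - N * τc * pc)) pc
        = -(2 * A * pd * (τ - N * τc) * σ2 * N ^ 2 * (N - 1) * τc ^ 2 * β ^ 3)
            / (β * N * pc * τc + σ2 * (K + 1)) ^ 3
      ∧ -(2 * A * pd * (τ - N * τc) * σ2 * N ^ 2 * (N - 1) * τc ^ 2 * β ^ 3)
            / (β * N * pc * τc + σ2 * (K + 1)) ^ 3 < 0 := by
  have hN2 : (2:ℝ) ≤ (N:ℝ) := by exact_mod_cast hN
  have hNpos : (0:ℝ) < (N:ℝ) := by linarith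
  have hN1 : (0:ℝ) < (N:ℝ) - 1 := by linarith
  have hτ' : (0:ℝ) < τ - (N:ℝ) * τc := by linarith
  have hK1 : (0:ℝ) < K + 1 := by linarith
  set F : ℝ → ℝ := fun pc : ℝ => (τ - N * τc) * (A * pd * (M
        - β * σ2 * (N - 1) / (β * N * pc * τc + σ2 * (K + 1))) + B) - N * τc * pc with hFdef
  have hden : ∀ pc : ℝ, 0 < pc → 0 < β * N * pc * τc + σ2 * (K + 1) := by
    intro pc hpc
    have h1 : 0 < β * (N:ℝ) * pc * τc := by positivity
    have h2 : 0 < σ2 * (K + 1) := by positivity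
    linarith
  have hden' : ∀ pc : ℝ, HasDerivAt (fun pc : ℝ => β * N * pc * τc + σ2 * (K + 1))
      (β * N * τc) pc := by
    intro pc
    have h := (((hasDerivAt_id pc).const_mul (β * (N:ℝ))).mul_const τc).add_const (σ2 * (K + 1))
    refine h.congr_deriv ?_
    ring
  -- first derivative
  have hF' : ∀ pc : ℝ, 0 < pc → HasDerivAt F
      ((τ - N * τc) * (A * pd * (β * σ2 * ((N:ℝ) - 1) * (β * N * τc)))
        / (β * N * pc * τc + σ2 * (K + 1)) ^ 2 - N * τc) pc := by
    intro pc hpc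
    have hne := (hden pc hpc).ne'
    have h1 := hden' pc
    have h2 : HasDerivAt (fun pc : ℝ => β * σ2 * ((N:ℝ) - 1) / (β * N * pc * τc + σ2 * (K + 1)))
        ((0 * (β * N * pc * τc + σ2 * (K + 1)) - β * σ2 * ((N:ℝ) - 1) * (β * N * τc))
          / (β * N * pc * τc + σ2 * (K + 1)) ^ 2) pc :=
      (hasDerivAt_const pc _).div h1 hne
    have h3 := (((((hasDerivAt_const pc M).sub h2).const_mul (A * pd)).add_const B).const_mul
      (τ - (N:ℝ) * τc)).sub ((hasDerivAt_id pc).const_mul ((N:ℝ) * τc))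
    refine h3.congr_deriv ?_
    field_simp
    ring
  set D1 : ℝ → ℝ := fun pc : ℝ =>
      (τ - N * τc) * (A * pd * (β * σ2 * ((N:ℝ) - 1) * (β * N * τc)))
        / (β * N * pc * τc + σ2 * (K + 1)) ^ 2 - N * τc with hD1def
  have hsecond : ∀ pc : ℝ, 0 < pc →
      deriv (deriv F) pc
        = -(2 * A * pd * (τ - N * τc) * σ2 * (N:ℝ) ^ 2 * ((N:ℝ) - 1) * τc ^ 2 * β ^ 3)
            / (β * N * pc * τc + σ2 * (K + 1)) ^ 3 := by
    intro pc hpc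
    have hev : deriv F =ᶠ[nhds pc] D1 := by
      filter_upwards [Ioi_mem_nhds hpc] with x hx using (hF' x hx).deriv
    rw [hev.deriv_eq]
    have hne := (hden pc hpc).ne'
    have h1 := hden' pc
    have h4 : HasDerivAt (fun pc : ℝ => (β * N * pc * τc + σ2 * (K + 1)) ^ 2)
        ((2:ℕ) * (β * N * pc * τc + σ2 * (K + 1)) ^ (2 - 1) * (β * N * τc)) pc := h1.pow 2
    have h5 : HasDerivAt D1
        ((0 * (β * N * pc * τc + σ2 * (K + 1)) ^ 2
          - (τ - N * τc) * (A * pd * (β * σ2 * ((N:ℝ) - 1) * (β * N * τc)))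
            * ((2:ℕ) * (β * N * pc * τc + σ2 * (K + 1)) ^ (2 - 1) * (β * N * τc)))
          / ((β * N * pc * τc + σ2 * (K + 1)) ^ 2) ^ 2) pc :=
      ((hasDerivAt_const pc _).div h4 (pow_ne_zero _ hne)).sub_const ((N:ℝ) * τc)
    rw [h5.deriv]
    field_simp
    ring
  have hnum : 0 < 2 * A * pd * (τ - (N:ℝ) * τc) * σ2 * (N:ℝ) ^ 2 * ((N:ℝ) - 1) * τc ^ 2 * β ^ 3 := by
    have h2A : (0:ℝ) < 2 * A := by linarith
    exact mul_pos (mul_pos (mul_pos (mul_pos (mul_pos (mul_pos (mul_pos h2A hpd) hτ') hσ)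
      (by positivity)) hN1) (by positivity)) (by positivity)
  constructor
  · apply strictConcaveOn_of_deriv2_neg (convex_Ioi 0)
    · intro x hx
      exact (hF' x hx).continuousAt.continuousWithinAt
    · intro x hx
      rw [interior_Ioi] at hx
      have h := hsecond x hx
      have hx3 : 0 < (β * N * x * τc + σ2 * (K + 1)) ^ 3 := pow_pos (hden x hx) 3
      simp only [Function.iterate_succ, Function.iterate_zero, Function.comp_apply, id]
      rw [h]
      exact div_neg_of_neg_of_pos (neg_lt_zero.mpr hnum) hx3
  · intro pc hpc
    refine ⟨hsecond pc hpc, ?_⟩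
    exact div_neg_of_neg_of_pos (neg_lt_zero.mpr hnum) (pow_pos (hden pc hpc) 3)
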